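/- With zero feedback (f = 0), the time-indexed support sets at level ℓ stabilize by time ℓ: for every level ℓ, supp_{r,0}(B,ℓ,*) = supp_{r,0}(B,ℓ,ℓ), i.e., any concept at level ℓ that is ever supported is already supported at time ℓ. -/
import Mathlib


open scoped Classical
noncomputable section

/-- A concept hierarchy: concepts at levels `0..L`, each concept at level `≥ 1`
has exactly `k` children one level below, level-0 concepts have no children,
there are exactly `k` top-level concepts, and every non-top concept has a parent. -/
structure ConceptHierarchy (α : Type) [DecidableEq α] where
  L : ℕ
  k : ℕ
  concepts : Finset α
  level : α → ℕ
  children : α → Finset α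
  level_le : ∀ c ∈ concepts, level c ≤ L
  children_mem : ∀ c ∈ concepts, ∀ c' ∈ children c, c' ∈ concepts
  children_level : ∀ c ∈ concepts, ∀ c' ∈ children c, level c' + 1 = level c
  children_card : ∀ c ∈ concepts, 1 ≤ level c → (children c).card = k
  children_leaf : ∀ c ∈ concepts, level c = 0 → children c = ∅
  top_card : (concepts.filter (fun c => level c = L)).card = k
  has_parent : ∀ c ∈ concepts, level c < L → ∃ c' ∈ concepts, c ∈ children c'

namespace ConceptHierarchy

variable {α : Type} [DecidableEq α]

/-- The parents of a concept. -/
def parents (H : ConceptHierarchy α) (c : α) : Finset α :=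
  H.concepts.filter (fun c' => c ∈ H.children c')

/-- Limited overlap: each concept at level `≥ 1` shares at most `o·k` children
with the union of the other concepts at the same level. -/
def LimitedOverlap (H : ConceptHierarchy α) (o : ℝ) : Prop :=
  ∀ c ∈ H.concepts, 1 ≤ H.level c →
    (((H.children c).filter (fun d => ∃ c' ∈ H.concepts, c' ≠ c ∧
        H.level c' = H.level c ∧ d ∈ H.children c')).card : ℝ) ≤ o * H.k

/-- Tree hierarchy: no overlap among child sets of distinct same-level concepts. -/
def IsTree (H : ConceptHierarchy α) : Prop :=
  ∀ c ∈ H.concepts, ∀ c' ∈ H.concepts, H.level c = H.level c' → c ≠ c' →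
    Disjoint (H.children c) (H.children c')

/-- Descendant relation: reflexive-transitive closure of the children relation. -/
inductive Desc (H : ConceptHierarchy α) : α → α → Prop
  | refl (c : α) : Desc H c c
  | step {c d e : α} : d ∈ H.children c → Desc H d e → Desc H c e

/-- The level-0 descendants of a concept. -/
def leaves (H : ConceptHierarchy α) (c : α) : Finset α :=
  H.concepts.filter (fun d => H.Desc c d ∧ H.level d = 0)

/-- Level-indexed bottom-up support sets: `S(0) = B ∩ C₀`,
`S(ℓ) = {c at level ℓ : |children(c) ∩ S(ℓ-1)| ≥ r·k}`. -/
def suppL (H : ConceptHierarchy α) (r : ℝ) (B : Finset α) : ℕ → Finset α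
  | 0 => B ∩ H.concepts.filter (fun c => H.level c = 0)
  | (ℓ+1) => H.concepts.filter (fun c => H.level c = ℓ + 1 ∧
      r * H.k ≤ ((H.children c ∩ suppL H r B ℓ).card : ℝ))

/-- `supp_r(B) = ⋃_ℓ S(ℓ)`. -/
def supp (H : ConceptHierarchy α) (r : ℝ) (B : Finset α) : Set α :=
  ⋃ ℓ, ↑(H.suppL r B ℓ)

/-- Time-and-level-indexed support sets with feedback strength `f`:
`S(0,t) = B`; `S(ℓ,0) = ∅` for `ℓ ≥ 1`; and
`S(ℓ,t) = S(ℓ,t-1) ∪ {c at level ℓ : |children(c) ∩ S(ℓ-1,t-1)| + f·|parents(c) ∩ S(ℓ+1,t-1)| ≥ r·k}`. -/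
def suppFB (H : ConceptHierarchy α) (r f : ℝ) (B : Finset α) : ℕ → ℕ → Finset α
  | 0, _ => B
  | (_+1), 0 => ∅
  | (ℓ+1), (t+1) => suppFB H r f B (ℓ+1) t ∪
      H.concepts.filter (fun c => H.level c = ℓ + 1 ∧
        r * H.k ≤ ((H.children c ∩ suppFB H r f B ℓ t).card : ℝ) +
          f * ((H.parents c ∩ suppFB H r f B (ℓ+2) t).card : ℝ))
  termination_by ℓ t => t

/-- `supp_{r,f}(B,*,t) = ⋃_ℓ S(ℓ,t)`. -/
def suppFBatTime (H : ConceptHierarchy α) (r f : ℝ) (B : Finset α) (t : ℕ) : Set α :=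
  ⋃ ℓ, ↑(H.suppFB r f B ℓ t)

/-- `supp_{r,f}(B) = ⋃_{ℓ,t} S(ℓ,t)`. -/
def suppFBSet (H : ConceptHierarchy α) (r f : ℝ) (B : Finset α) : Set α :=
  ⋃ t, H.suppFBatTime r f B t

end ConceptHierarchy

/-- Feed-forward 0/1 weights: weight 1 from the rep of a child to the rep of its
parent, weight 0 otherwise. -/
def ffWeight {α ν : Type} [DecidableEq α] (H : ConceptHierarchy α) (rep : α → ν)
    (u v : ν) : ℝ :=
  if ∃ c ∈ H.concepts, ∃ c' ∈ H.children c, u = rep c' ∧ v = rep c then 1 else 0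

/-- Feedback-network weights: weight 1 upward (rep of child to rep of parent),
weight `f` downward (rep of parent to rep of child), 0 otherwise. -/
def fbWeight {α ν : Type} [DecidableEq α] (H : ConceptHierarchy α) (rep : α → ν)
    (f : ℝ) (u v : ν) : ℝ :=
  if ∃ c ∈ H.concepts, ∃ c' ∈ H.children c, u = rep c' ∧ v = rep c then 1
  else if ∃ c ∈ H.concepts, ∃ c' ∈ H.children c, u = rep c ∧ v = rep c' then f
  else 0

lemma suppFB_zero_succ {α : Type} [DecidableEq α] (H : ConceptHierarchy α)
    (r : ℝ) (B : Finset α) (ℓ t : ℕ) :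
    H.suppFB r 0 B (ℓ+1) (t+1) = H.suppFB r 0 B (ℓ+1) t ∪
      H.concepts.filter (fun c => H.level c = ℓ + 1 ∧
        r * H.k ≤ ((H.children c ∩ H.suppFB r 0 B ℓ t).card : ℝ)) := by
  rw [ConceptHierarchy.suppFB]
  simp

lemma suppFB_mono_step {α : Type} [DecidableEq α] (H : ConceptHierarchy α)
    (r f : ℝ) (B : Finset α) (ℓ t : ℕ) :
    H.suppFB r f B ℓ t ⊆ H.suppFB r f B ℓ (t+1) := by
  cases ℓ with
  | zero => simp [ConceptHierarchy.suppFB]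
  | succ m => rw [ConceptHierarchy.suppFB]; exact Finset.subset_union_left

lemma suppFB_mono {α : Type} [DecidableEq α] (H : ConceptHierarchy α)
    (r f : ℝ) (B : Finset α) (ℓ : ℕ) {t t' : ℕ} (h : t ≤ t') :
    H.suppFB r f B ℓ t ⊆ H.suppFB r f B ℓ t' := by
  induction t' with
  | zero => simp_all
  | succ n ih =>
    rcases Nat.lt_or_ge t (n+1) with h' | h'
    · exact (ih (Nat.lt_succ_iff.mp h')).trans (suppFB_mono_step H r f B ℓ n)
    · have : t = n + 1 := le_antisymm h h'
      subst this; rfl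

lemma suppFB_zero_stable {α : Type} [DecidableEq α] (H : ConceptHierarchy α)
    (r : ℝ) (B : Finset α) :
    ∀ ℓ t : ℕ, H.suppFB r 0 B ℓ (ℓ + t) = H.suppFB r 0 B ℓ ℓ := by
  intro ℓ
  induction ℓ with
  | zero => intro t; simp [ConceptHierarchy.suppFB]
  | succ m ih =>
    intro t
    induction t with
    | zero => rfl
    | succ n ihn =>
      have h1 : m + 1 + (n + 1) = (m + 1 + n) + 1 := rfl
      rw [h1, suppFB_zero_succ]
      have h2 : m + 1 + n = m + (n + 1) := by omega
      rw [ihn, h2, ih (n+1), Finset.union_eq_left]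
      have hs : H.suppFB r 0 B (m+1) (m+1) = H.suppFB r 0 B (m+1) m ∪
          H.concepts.filter (fun c => H.level c = m + 1 ∧
            r * H.k ≤ ((H.children c ∩ H.suppFB r 0 B m m).card : ℝ)) :=
        suppFB_zero_succ H r B m m
      rw [hs]; exact Finset.subset_union_right

/-- with zero feedback, the time-indexed support sets at level `ℓ`
stabilize by time `ℓ`: `supp_{r,0}(B,ℓ,*) = supp_{r,0}(B,ℓ,ℓ)`. -/
theorem suppFB_zero_stabilize {α : Type} [DecidableEq α] (H : ConceptHierarchy α)
    (r : ℝ) (B : Finset α) (hB : ∀ b ∈ B, H.level b = 0) :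
    ∀ ℓ : ℕ, (⋃ t : ℕ, (↑(H.suppFB r 0 B ℓ t) : Set α)) = ↑(H.suppFB r 0 B ℓ ℓ) := by
  intro ℓ
  apply Set.Subset.antisymm
  · apply Set.iUnion_subset
    intro t
    have h1 : H.suppFB r 0 B ℓ t ⊆ H.suppFB r 0 B ℓ (ℓ + t) :=
      suppFB_mono H r 0 B ℓ (Nat.le_add_left t ℓ)
    rw [suppFB_zero_stable H r B ℓ t] at h1
    exact_mod_cast h1
  · exact Set.subset_iUnion (fun t => (↑(H.suppFB r 0 B ℓ t) : Set α)) ℓ
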